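/- Let v be a vertex and x ∈ {1,…,k}, and set t = t_x + dist(s_x, v). If there exists y ∈ {1,…,k} with t_y > t_x and t_y + dist(s_y, v) ≤ t, then A(v,t) < 1 + dist(s_x, v); that is, the information held by v at time t is strictly fresher than the information seeded at s_x, so the candidate time t_x + dist(s_x,v) is not a discontinuity point attributable to seed s_x. -/
import Mathlib


open Finset

def tsel (Δ j : ℕ) : ℕ := (j - 1) * Δ + 1

noncomputable def AoI {V : Type*} (G : SimpleGraph V) (s : ℕ → V) (Δ k A0 : ℕ) (v : V) :
    ℕ → ℕ
  | 0 => A0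
  | t + 1 =>
    let prev := AoI G s Δ k A0 v t
    let Ω : Finset ℕ := (Finset.Icc 1 k).filter
      (fun j => t + 1 = tsel Δ j + G.dist (s j) v ∧ G.dist (s j) v + 1 ≤ prev)
    if h : Ω.Nonempty then Ω.inf' h (fun j => 1 + G.dist (s j) v) else prev + 1

noncomputable def AoIR {V : Type*} (G : SimpleGraph V) (s : ℕ → V) (Δ k A0 : ℕ) (v : V)
    (t : ℝ) : ℝ :=
  (AoI G s Δ k A0 v ⌊t⌋₊ : ℝ) + (t - ⌊t⌋₊)

open scoped Classical in
noncomputable def Dset {V : Type*} (G : SimpleGraph V) (s : ℕ → V) (Δ k : ℕ) (v : V) :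
    Finset ℕ :=
  (Finset.Icc 1 k).filter (fun x => ∀ y ∈ Finset.Icc 1 k, x < y →
    tsel Δ x + G.dist (s x) v < tsel Δ y + G.dist (s y) v)

lemma AoI_step {V : Type*} (G : SimpleGraph V) (s : ℕ → V) (Δ k A0 : ℕ) (v : V) (t : ℕ) :
    AoI G s Δ k A0 v (t + 1) ≤ AoI G s Δ k A0 v t + 1 := by
  rw [AoI]
  split
  · rename_i h
    obtain ⟨i, hi⟩ := h
    refine le_trans (Finset.inf'_le _ hi) ?_
    have := (Finset.mem_filter.mp hi).2.2
    omega
  · exact le_rfl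

lemma AoI_growth {V : Type*} (G : SimpleGraph V) (s : ℕ → V) (Δ k A0 : ℕ) (v : V) (t m : ℕ) :
    AoI G s Δ k A0 v (t + m) ≤ AoI G s Δ k A0 v t + m := by
  induction m with
  | zero => simp
  | succ m ih =>
    have := AoI_step G s Δ k A0 v (t + m)
    rw [← Nat.add_assoc]
    omega

lemma AoI_hit {V : Type*} (G : SimpleGraph V) (s : ℕ → V) (Δ k A0 : ℕ) (v : V)
    (j : ℕ) (hj : j ∈ Finset.Icc 1 k) :
    AoI G s Δ k A0 v (tsel Δ j + G.dist (s j) v) ≤ 1 + G.dist (s j) v := by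
  have hts : tsel Δ j + G.dist (s j) v = ((j - 1) * Δ + G.dist (s j) v) + 1 := by
    simp [tsel]; ring
  rw [hts, AoI]
  set n := (j - 1) * Δ + G.dist (s j) v with hn
  set prev := AoI G s Δ k A0 v n with hprev
  have hjmem : n + 1 = tsel Δ j + G.dist (s j) v := by omega
  by_cases hfresh : G.dist (s j) v + 1 ≤ prev
  · have hjΩ : j ∈ (Finset.Icc 1 k).filter
        (fun i => n + 1 = tsel Δ i + G.dist (s i) v ∧ G.dist (s i) v + 1 ≤ prev) :=
      Finset.mem_filter.mpr ⟨hj, hjmem, hfresh⟩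
    rw [dif_pos ⟨j, hjΩ⟩]
    exact Finset.inf'_le _ hjΩ
  · split
    · rename_i h
      obtain ⟨i, hi⟩ := h
      refine le_trans (Finset.inf'_le _ hi) ?_
      have := (Finset.mem_filter.mp hi).2.2
      omega
    · omega

theorem stmt1 {V : Type*} [Fintype V] (G : SimpleGraph V) (hconn : G.Connected)
    (s : ℕ → V) (Δ k A0 : ℕ) (hΔ : 1 ≤ Δ) (hk : 1 ≤ k) (hA0 : 1 ≤ A0)
    (v : V) (x : ℕ) (hx : x ∈ Finset.Icc 1 k)
    (y : ℕ) (hy : y ∈ Finset.Icc 1 k) (hty : tsel Δ x < tsel Δ y)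
    (hle : tsel Δ y + G.dist (s y) v ≤ tsel Δ x + G.dist (s x) v) :
    AoI G s Δ k A0 v (tsel Δ x + G.dist (s x) v) < 1 + G.dist (s x) v := by
  obtain ⟨m, hm⟩ := Nat.exists_eq_add_of_le hle
  have h1 := AoI_hit G s Δ k A0 v y hy
  have h2 := AoI_growth G s Δ k A0 v (tsel Δ y + G.dist (s y) v) m
  rw [← hm] at h2
  omega
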